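/- For the lifted 𝕋²-action on the unit cosphere bundle S*ℝ⁴ = {(x,y,u,v) : ‖u‖²+‖v‖² = 1} with momentum map J(x,y,u,v) = (ρ₄, σ₄) = (x₁u₂−x₂u₁, y₁v₂−y₂v₁), the reduced space J⁻¹(0)/𝕋² is homeomorphic (via the Hilbert map (ρ₁,ρ₂,ρ₃,σ₁,σ₂,σ₃)) to the semialgebraic set {(ρ,σ) ∈ ℝ⁶ : ρ₁ ≥ 0, σ₁ ≥ 0, ρ₁² = ρ₂²+ρ₃², σ₁² = σ₂²+σ₃², ρ₁+ρ₃+σ₁+σ₃ = 2}. -/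
import Mathlib


noncomputable def rot (θ : ℝ) (p : ℝ × ℝ) : ℝ × ℝ :=
  (p.1 * Real.cos θ - p.2 * Real.sin θ, p.1 * Real.sin θ + p.2 * Real.cos θ)

def rho1 (x u : ℝ × ℝ) : ℝ := x.1 ^ 2 + x.2 ^ 2 + u.1 ^ 2 + u.2 ^ 2
def rho2 (x u : ℝ × ℝ) : ℝ := 2 * (x.1 * u.1 + x.2 * u.2)
def rho3 (x u : ℝ × ℝ) : ℝ := u.1 ^ 2 + u.2 ^ 2 - x.1 ^ 2 - x.2 ^ 2
def rho4 (x u : ℝ × ℝ) : ℝ := x.1 * u.2 - x.2 * u.1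

/-- A point of `T*ℝ⁴`: `z = ((x,y),(u,v))`. -/
abbrev Pt := ((ℝ × ℝ) × (ℝ × ℝ)) × ((ℝ × ℝ) × (ℝ × ℝ))

/-- `J⁻¹(0)` on the unit cosphere bundle `S*ℝ⁴ = {‖u‖²+‖v‖² = 1}`: `ρ₄ = 0`, `σ₄ = 0`. -/
def JzeroT : Set Pt :=
  {z | (z.2.1.1 ^ 2 + z.2.1.2 ^ 2) + (z.2.2.1 ^ 2 + z.2.2.2 ^ 2) = 1 ∧
       rho4 z.1.1 z.2.1 = 0 ∧ rho4 z.1.2 z.2.2 = 0}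

/-- The Hilbert map `(ρ₁,ρ₂,ρ₃,σ₁,σ₂,σ₃)`. -/
def hilbT (z : Pt) : ℝ × ℝ × ℝ × ℝ × ℝ × ℝ :=
  (rho1 z.1.1 z.2.1, rho2 z.1.1 z.2.1, rho3 z.1.1 z.2.1,
   rho1 z.1.2 z.2.2, rho2 z.1.2 z.2.2, rho3 z.1.2 z.2.2)

/-- The target semialgebraic set
`{ρ₁ ≥ 0, σ₁ ≥ 0, ρ₁² = ρ₂²+ρ₃², σ₁² = σ₂²+σ₃², ρ₁+ρ₃+σ₁+σ₃ = 2}`. -/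
def targetSet : Set (ℝ × ℝ × ℝ × ℝ × ℝ × ℝ) :=
  {w | 0 ≤ w.1 ∧ 0 ≤ w.2.2.2.1 ∧
       w.1 ^ 2 = w.2.1 ^ 2 + w.2.2.1 ^ 2 ∧
       w.2.2.2.1 ^ 2 = w.2.2.2.2.1 ^ 2 + w.2.2.2.2.2 ^ 2 ∧
       w.1 + w.2.2.1 + w.2.2.2.1 + w.2.2.2.2.2 = 2}

lemma rot_rho1 (θ : ℝ) (x u : ℝ × ℝ) : rho1 (rot θ x) (rot θ u) = rho1 x u := by
  have h := Real.sin_sq_add_cos_sq θ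
  simp only [rho1, rot]
  linear_combination (x.1^2+x.2^2+u.1^2+u.2^2) * h

lemma rot_rho2 (θ : ℝ) (x u : ℝ × ℝ) : rho2 (rot θ x) (rot θ u) = rho2 x u := by
  have h := Real.sin_sq_add_cos_sq θ
  simp only [rho2, rot]
  linear_combination (2*(x.1*u.1+x.2*u.2)) * h

lemma rot_rho3 (θ : ℝ) (x u : ℝ × ℝ) : rho3 (rot θ x) (rot θ u) = rho3 x u := by
  have h := Real.sin_sq_add_cos_sq θ
  simp only [rho3, rot]
  linear_combination (u.1^2+u.2^2-x.1^2-x.2^2) * h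

lemma exists_cos_sin (c s : ℝ) (h : c^2 + s^2 = 1) :
    ∃ θ, Real.cos θ = c ∧ Real.sin θ = s := by
  have hc1 : -1 ≤ c := by nlinarith [sq_nonneg s]
  have hc2 : c ≤ 1 := by nlinarith [sq_nonneg s]
  rcases le_or_gt 0 s with hs | hs
  · refine ⟨Real.arccos c, Real.cos_arccos hc1 hc2, ?_⟩
    rw [Real.sin_arccos, show (1:ℝ) - c^2 = s^2 by linarith, Real.sqrt_sq hs]
  · refine ⟨-Real.arccos c, by rw [Real.cos_neg]; exact Real.cos_arccos hc1 hc2, ?_⟩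
    rw [Real.sin_neg, Real.sin_arccos, show (1:ℝ) - c^2 = s^2 by linarith,
      Real.sqrt_sq_eq_abs, abs_of_neg hs, neg_neg]

lemma exists_rot {p q : ℝ × ℝ} (hp : p.1^2+p.2^2 ≠ 0)
    (h : p.1^2+p.2^2 = q.1^2+q.2^2) : ∃ θ, rot θ p = q := by
  have hcs : ((p.1*q.1+p.2*q.2)/(p.1^2+p.2^2))^2 + ((p.1*q.2-p.2*q.1)/(p.1^2+p.2^2))^2 = 1 := by
    field_simp
    linear_combination (-(p.1^2+p.2^2)) * h
  obtain ⟨θ, hc, hs⟩ := exists_cos_sin _ _ hcs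
  refine ⟨θ, ?_⟩
  simp only [rot, hc, hs, Prod.ext_iff]
  constructor <;> (field_simp; try ring)

lemma sq_add_sq_zero {a b : ℝ} (h : a^2 + b^2 = 0) : a = 0 ∧ b = 0 := by
  constructor <;> nlinarith [sq_nonneg a, sq_nonneg b]

lemma pair_lemma {x u x' u' : ℝ × ℝ}
    (h4 : rho4 x u = 0) (h4' : rho4 x' u' = 0)
    (h1 : rho1 x u = rho1 x' u') (h2 : rho2 x u = rho2 x' u')
    (h3 : rho3 x u = rho3 x' u') :
    ∃ θ, rot θ x = x' ∧ rot θ u = u' := by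
  simp only [rho1, rho2, rho3, rho4] at h4 h4' h1 h2 h3
  have hu : u.1^2+u.2^2 = u'.1^2+u'.2^2 := by linarith
  have hx : x.1^2+x.2^2 = x'.1^2+x'.2^2 := by linarith
  rcases eq_or_ne (u.1^2+u.2^2) 0 with h0 | h0
  · obtain ⟨hu1, hu2⟩ := sq_add_sq_zero h0
    obtain ⟨hu1', hu2'⟩ := sq_add_sq_zero (hu ▸ h0)
    rcases eq_or_ne (x.1^2+x.2^2) 0 with hx0 | hx0
    · obtain ⟨hx1, hx2⟩ := sq_add_sq_zero hx0
      obtain ⟨hx1', hx2'⟩ := sq_add_sq_zero (hx ▸ hx0)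
      exact ⟨0, by simp [rot, Prod.ext_iff, hx1, hx2, hx1', hx2'],
        by simp [rot, Prod.ext_iff, hu1, hu2, hu1', hu2']⟩
    · obtain ⟨θ, hθ⟩ := exists_rot hx0 hx
      exact ⟨θ, hθ, by simp [rot, Prod.ext_iff, hu1, hu2, hu1', hu2']⟩
  · obtain ⟨θ, hθ⟩ := exists_rot h0 hu
    refine ⟨θ, ?_, hθ⟩
    simp only [rot, Prod.ext_iff] at hθ ⊢
    obtain ⟨hθ1, hθ2⟩ := hθ
    constructor
    · refine mul_right_cancel₀ h0 ?_
      linear_combination (Real.cos θ*u.2 + Real.sin θ*u.1) * h4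
        + (x.1*u.1+x.2*u.2) * hθ1 + (u'.1/2) * h2 - u'.2 * h4' - x'.1 * hu
    · refine mul_right_cancel₀ h0 ?_
      linear_combination (Real.sin θ*u.2 - Real.cos θ*u.1) * h4
        + (x.1*u.1+x.2*u.2) * hθ2 + (u'.2/2) * h2 + u'.1 * h4' - x'.2 * hu

lemma build (r1 r2 r3 : ℝ) (h1 : 0 ≤ r1) (hc : r1^2 = r2^2+r3^2) :
    ∃ a b : ℝ, 0 ≤ b ∧ a^2+b^2 = r1 ∧ 2*(a*b) = r2 ∧ b^2-a^2 = r3 := by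
  have h31 : r3 ≤ r1 := by nlinarith [sq_nonneg r2]
  have h31' : -r1 ≤ r3 := by nlinarith [sq_nonneg r2]
  have hb2 : (Real.sqrt ((r1+r3)/2))^2 = (r1+r3)/2 := Real.sq_sqrt (by linarith)
  have ha2 : (Real.sqrt ((r1-r3)/2))^2 = (r1-r3)/2 := Real.sq_sqrt (by linarith)
  set b := Real.sqrt ((r1+r3)/2)
  set a0 := Real.sqrt ((r1-r3)/2)
  have hb0 : 0 ≤ b := Real.sqrt_nonneg _
  have ha0 : 0 ≤ a0 := Real.sqrt_nonneg _
  have hab : (2*(a0*b))^2 = r2^2 := by nlinarith [hb2, ha2]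
  rcases le_or_gt 0 r2 with hr2 | hr2
  · refine ⟨a0, b, hb0, by nlinarith, ?_, by nlinarith⟩
    have hnn : 0 ≤ 2*(a0*b) := by positivity
    nlinarith [hab, hnn, hr2, sq_nonneg (2*(a0*b) - r2), sq_nonneg (2*(a0*b) + r2)]
  · refine ⟨-a0, b, hb0, by nlinarith, ?_, by nlinarith⟩
    have hnn : 0 ≤ 2*(a0*b) := by positivity
    have : 2*(a0*b) = -r2 := by
      nlinarith [hab, hnn, sq_nonneg (2*(a0*b) + r2), sq_nonneg (2*(a0*b) - r2)]
    linarith [this]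

/- STATEMENT 10 -/
theorem stmt10 :
    (∀ z ∈ JzeroT, ∀ w ∈ JzeroT,
      (hilbT z = hilbT w ↔
        ∃ θ φ : ℝ,
          ((rot θ z.1.1, rot φ z.1.2), (rot θ z.2.1, rot φ z.2.2)) = w)) ∧
    hilbT '' JzeroT = targetSet := by
  constructor
  · rintro ⟨⟨x, y⟩, u, v⟩ ⟨hz1, hz2, hz3⟩ ⟨⟨x', y'⟩, u', v'⟩ ⟨hw1, hw2, hw3⟩
    simp only at hz2 hz3 hw2 hw3 ⊢
    constructor
    · intro h
      simp only [hilbT, Prod.mk.injEq] at h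
      obtain ⟨e1, e2, e3, e4, e5, e6⟩ := h
      obtain ⟨θ, hθx, hθu⟩ := pair_lemma hz2 hw2 e1 e2 e3
      obtain ⟨φ, hφy, hφv⟩ := pair_lemma hz3 hw3 e4 e5 e6
      exact ⟨θ, φ, by simp [hθx, hθu, hφy, hφv]⟩
    · rintro ⟨θ, φ, h⟩
      simp only [Prod.mk.injEq] at h
      obtain ⟨⟨ha, hb⟩, hc, hd⟩ := h
      subst ha hb hc hd
      simp only [hilbT, rot_rho1, rot_rho2, rot_rho3]
  · ext w
    constructor
    · rintro ⟨⟨⟨x, y⟩, u, v⟩, ⟨hz1, hz2, hz3⟩, rfl⟩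
      simp only [hilbT, targetSet, Set.mem_setOf_eq, rho1, rho2, rho3] at *
      simp only [rho4] at hz2 hz3
      refine ⟨by positivity, by positivity, ?_, ?_, by linarith⟩
      · linear_combination (4*(x.1*u.2 - x.2*u.1)) * hz2
      · linear_combination (4*(y.1*v.2 - y.2*v.1)) * hz3
    · rintro ⟨hw1, hw2, hw3, hw4, hw5⟩
      obtain ⟨a, b, hb, hab1, hab2, hab3⟩ := build w.1 w.2.1 w.2.2.1 hw1 hw3
      obtain ⟨a', b', hb', hab1', hab2', hab3'⟩ :=
        build w.2.2.2.1 w.2.2.2.2.1 w.2.2.2.2.2 hw2 hw4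
      refine ⟨(((a, 0), (a', 0)), ((b, 0), (b', 0))), ⟨?_, ?_, ?_⟩, ?_⟩
      · simp only [JzeroT, Set.mem_setOf_eq]
        norm_num
        linarith
      · simp [rho4]
      · simp [rho4]
      · simp only [hilbT, rho1, rho2, rho3, Prod.ext_iff]
        norm_num
        exact ⟨by linarith, by linarith, by linarith, by linarith, by linarith, by linarith⟩
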